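/- Let n ≥ 1. There exists a real number α₀ ≥ 1 such that for every real α > α₀ the following holds: if Q₁, …, Qₙ are pairwise distinct elements of Q̃^{BCD} and the family (Q₁, …, Qₙ) is η_α-oriented, then for every subset S ⊆ {1, …, n} the number of indices k with supp(Q_k) ⊆ S is at most card S. (Equivalently: in the multigraph on vertex set {1, …, n} that has a loop at j for each Q_k of the form ±e_j and an edge {i, j} for each Q_k of the form ±e_i ± e_j, every connected component contains exactly as many edges as vertices, i.e., exactly one cycle.) -/

import Mathlib

open scoped Classical

/-- The set `Q̃^{BCD} ⊆ ℝⁿ`: all `±e_j` and all `±e_i ± e_j` for `i < j`. -/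
def QBCD (n : ℕ) : Set (Fin n → ℝ) :=
  {v | (∃ j : Fin n, v = Pi.single j (1 : ℝ) ∨ v = -Pi.single j (1 : ℝ)) ∨
    ∃ i j : Fin n, i < j ∧
      (v = Pi.single i (1 : ℝ) + Pi.single j (1 : ℝ) ∨
       v = Pi.single i (1 : ℝ) - Pi.single j (1 : ℝ) ∨
       v = -Pi.single i (1 : ℝ) + Pi.single j (1 : ℝ) ∨
       v = -Pi.single i (1 : ℝ) - Pi.single j (1 : ℝ))}

/-- A family `(Q₁, …, Qₘ)` of vectors in `ℝⁿ` is `η`-oriented if `η` is a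
strictly positive linear combination of the `Qₖ`. -/
def EtaOriented {n m : ℕ} (η : Fin n → ℝ) (Q : Fin m → Fin n → ℝ) : Prop :=
  ∃ a : Fin m → ℝ, (∀ k, 0 < a k) ∧ ∑ k, a k • Q k = η

/-- The vector `η_α = (1, α, α², …, α^{n−1}) ∈ ℝⁿ`. -/
def etaVec (n : ℕ) (α : ℝ) : Fin n → ℝ := fun i => α ^ (i : ℕ)

/-- If more than `card S` of the `Q k` have support inside `S`, there is a nonzero
functional `ψ` vanishing on `S` and annihilating all the `Q k` with support not in `S`. -/
lemma aux_psi (n : ℕ) (Q : Fin n → Fin n → ℝ) (S : Finset (Fin n))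
    (hT : S.card < (Finset.univ.filter fun k : Fin n => ∀ i : Fin n, Q k i ≠ 0 → i ∈ S).card) :
    ∃ ψ : Fin n → ℝ, ψ ≠ 0 ∧ (∀ i ∈ S, ψ i = 0) ∧
      ∀ k : Fin n, k ∉ (Finset.univ.filter fun k : Fin n => ∀ i : Fin n, Q k i ≠ 0 → i ∈ S) →
        ∑ i, ψ i * Q k i = 0 := by
  set T := (Finset.univ.filter fun k : Fin n => ∀ i : Fin n, Q k i ≠ 0 → i ∈ S) with hTdef
  set K := Tᶜ with hKdef
  let F : (Fin n → ℝ) →ₗ[ℝ] ((↥K → ℝ) × (↥S → ℝ)) :=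
    LinearMap.prod
      (LinearMap.pi fun k : ↥K => ∑ i : Fin n, Q (k : Fin n) i • LinearMap.proj i)
      (LinearMap.pi fun i : ↥S => LinearMap.proj (i : Fin n))
  have hdim : Module.finrank ℝ ((↥K → ℝ) × (↥S → ℝ)) < Module.finrank ℝ (Fin n → ℝ) := by
    rw [Module.finrank_prod, Module.finrank_fin_fun]
    simp only [Module.finrank_pi, Fintype.card_coe]
    have h1 : K.card = n - T.card := by
      rw [hKdef, Finset.card_compl, Fintype.card_fin]
    have h2 : T.card ≤ n := by
      simpa using Finset.card_le_card (Finset.subset_univ T)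
    omega
  have hker : LinearMap.ker F ≠ ⊥ := LinearMap.ker_ne_bot_of_finrank_lt hdim
  rw [Submodule.ne_bot_iff] at hker
  obtain ⟨ψ, hψmem, hψne⟩ := hker
  rw [LinearMap.mem_ker] at hψmem
  refine ⟨ψ, hψne, ?_, ?_⟩
  · intro i hi
    have := congrFun (congrArg Prod.snd hψmem) ⟨i, hi⟩
    simpa [F] using this
  · intro k hk
    have := congrFun (congrArg Prod.fst hψmem) ⟨k, by simpa [hKdef] using hk⟩
    simp only [F, LinearMap.prod_apply, Function.prod, LinearMap.pi_apply, LinearMap.sum_apply,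
      LinearMap.smul_apply, LinearMap.proj_apply, Prod.fst_zero, Pi.zero_apply,
      smul_eq_mul] at this
    rw [← this]
    exact Finset.sum_congr rfl fun i _ => by ring

open Polynomial in
/-- For fixed `Q` and `S`, the set of `α` for which the support bound fails while
`η_α` is a linear combination of the `Q k` is finite. -/
lemma aux_bad_finite (n : ℕ) (Q : Fin n → Fin n → ℝ) (S : Finset (Fin n)) :
    Set.Finite {α : ℝ | S.card < (Finset.univ.filter fun k : Fin n =>
        ∀ i : Fin n, Q k i ≠ 0 → i ∈ S).card ∧
      ∃ a : Fin n → ℝ, ∑ k, a k • Q k = etaVec n α} := by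
  by_cases hT : S.card < (Finset.univ.filter fun k : Fin n =>
      ∀ i : Fin n, Q k i ≠ 0 → i ∈ S).card
  · obtain ⟨ψ, hψne, hψS, hψK⟩ := aux_psi n Q S hT
    set p : ℝ[X] := ∑ i : Fin n, C (ψ i) * X ^ (i : ℕ) with hp
    have hpne : p ≠ 0 := by
      obtain ⟨i, hi⟩ := Function.ne_iff.mp hψne
      simp only [Pi.zero_apply] at hi
      intro h
      apply hi
      have := congrArg (fun q => Polynomial.coeff q (i : ℕ)) h
      simp only [hp, Polynomial.finset_sum_coeff, Polynomial.coeff_C_mul,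
        Polynomial.coeff_X_pow, Polynomial.coeff_zero, mul_ite, mul_one, mul_zero] at this
      rwa [Finset.sum_eq_single i (fun j _ hji => by simp [Fin.val_eq_val, Ne.symm hji])
        (by simp), if_pos rfl] at this
    apply Set.Finite.subset (Polynomial.finite_setOf_isRoot hpne)
    rintro α ⟨-, a, ha⟩
    have hcoord : ∀ i : Fin n, α ^ (i : ℕ) = ∑ k, a k * Q k i := by
      intro i
      have := congrFun ha i
      simpa [etaVec, Finset.sum_apply] using this.symm
    have : ∑ i : Fin n, ψ i * α ^ (i : ℕ) = 0 := by
      calc ∑ i : Fin n, ψ i * α ^ (i : ℕ)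
          = ∑ i : Fin n, ∑ k : Fin n, ψ i * (a k * Q k i) := by
            refine Finset.sum_congr rfl fun i _ => ?_
            rw [hcoord i, Finset.mul_sum]
        _ = ∑ k : Fin n, a k * ∑ i : Fin n, ψ i * Q k i := by
            rw [Finset.sum_comm]
            refine Finset.sum_congr rfl fun k _ => ?_
            rw [Finset.mul_sum]; exact Finset.sum_congr rfl fun i _ => by ring
        _ = 0 := by
            refine Finset.sum_eq_zero fun k _ => ?_
            by_cases hk : k ∈ (Finset.univ.filter fun k : Fin n =>
                ∀ i : Fin n, Q k i ≠ 0 → i ∈ S)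
            · have hsupp : ∀ i : Fin n, Q k i ≠ 0 → i ∈ S := by
                simpa using (Finset.mem_filter.mp hk).2
              have : ∑ i : Fin n, ψ i * Q k i = 0 := by
                refine Finset.sum_eq_zero fun i _ => ?_
                by_cases hQ : Q k i = 0
                · rw [hQ, mul_zero]
                · rw [hψS i (hsupp i hQ), zero_mul]
              rw [this, mul_zero]
            · rw [hψK k hk, mul_zero]
    show p.IsRoot α
    simp only [hp, Polynomial.IsRoot, Polynomial.eval_finset_sum, Polynomial.eval_mul,
      Polynomial.eval_C, Polynomial.eval_pow, Polynomial.eval_X]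
    exact this
  · convert Set.finite_empty
    rw [Set.eq_empty_iff_forall_notMem]
    rintro α ⟨h, -⟩
    exact hT h

/-- Every entry of an element of `Q̃^{BCD}` lies in `{-1, 0, 1}`. -/
lemma QBCD_mem_pi {n : ℕ} {v : Fin n → ℝ} (hv : v ∈ QBCD n) (i : Fin n) :
    v i ∈ ({-1, 0, 1} : Set ℝ) := by
  obtain ⟨j, hj | hj⟩ | ⟨a, b, hab, h | h | h | h⟩ := hv <;>
    subst_vars <;>
    simp only [Pi.single_apply, Pi.add_apply, Pi.sub_apply, Pi.neg_apply, Set.mem_insert_iff,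
      Set.mem_singleton_iff] <;>
    split_ifs
  all_goals try norm_num
  all_goals omega

/-- There are only finitely many families `Q` with all values in `Q̃^{BCD}`. -/
lemma qset_finite (n : ℕ) : {Q : Fin n → Fin n → ℝ | ∀ k, Q k ∈ QBCD n}.Finite := by
  have h3 : ({-1, 0, 1} : Set ℝ).Finite :=
    ((Set.finite_singleton (1 : ℝ)).insert 0).insert (-1)
  have hQ : (QBCD n).Finite :=
    Set.Finite.subset (Set.Finite.pi fun _ => h3) (fun v hv i _ => QBCD_mem_pi hv i)
  exact Set.Finite.subset (Set.Finite.pi fun _ => hQ) (fun Q hQ' k _ => hQ' k)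

/-- for all sufficiently large `α`, if `Q₁, …, Qₙ` are pairwise
distinct elements of `Q̃^{BCD}` forming an `η_α`-oriented family, then for every
subset `S` of coordinates, at most `card S` of the `Qₖ` have support inside `S`
(each connected component of the associated graph has exactly one cycle). -/
theorem etaOriented_support_bound (n : ℕ) (hn : 1 ≤ n) :
    ∃ α₀ : ℝ, 1 ≤ α₀ ∧ ∀ α : ℝ, α₀ < α →
      ∀ Q : Fin n → Fin n → ℝ, Function.Injective Q → (∀ k, Q k ∈ QBCD n) →
        EtaOriented (etaVec n α) Q →
          ∀ S : Finset (Fin n),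
            (Finset.univ.filter fun k : Fin n => ∀ i : Fin n, Q k i ≠ 0 → i ∈ S).card
              ≤ S.card := by
  set Bad : Set ℝ :=
    ⋃ Q ∈ {Q : Fin n → Fin n → ℝ | ∀ k, Q k ∈ QBCD n}, ⋃ S : Finset (Fin n),
      {α : ℝ | S.card < (Finset.univ.filter fun k : Fin n =>
          ∀ i : Fin n, Q k i ≠ 0 → i ∈ S).card ∧
        ∃ a : Fin n → ℝ, ∑ k, a k • Q k = etaVec n α} with hBadDef
  have hBadFin : Bad.Finite :=
    Set.Finite.biUnion (qset_finite n) fun Q _ =>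
      Set.finite_iUnion fun S => aux_bad_finite n Q S
  obtain ⟨M, hM⟩ := hBadFin.bddAbove
  refine ⟨max 1 M, le_max_left _ _, ?_⟩
  intro α hα Q hQinj hQmem hEta S
  by_contra hcon
  have hlt : S.card < (Finset.univ.filter fun k : Fin n =>
      ∀ i : Fin n, Q k i ≠ 0 → i ∈ S).card := Nat.lt_of_not_le hcon
  obtain ⟨a, -, ha⟩ := hEta
  have hαBad : α ∈ Bad := by
    rw [hBadDef]
    exact Set.mem_biUnion hQmem (Set.mem_iUnion.mpr ⟨S, hlt, a, ha⟩)
  have : α ≤ M := hM hαBad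
  have : α ≤ max 1 M := le_trans this (le_max_right _ _)
  exact absurd hα (not_lt_of_ge this)
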